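/- Fix a unit vector e ∈ S² ⊂ ℝ³ and let λ = (uniform on S²) × (Lebesgue on ℝ₊) × (uniform on S²) on 𝔻 = S² × ℝ₊ × S². There is a constant C < ∞ such that for all s ∈ (0, 1/2]: λ({(u,h,v) ∈ 𝔻 : ∠(−u,v) ≤ 2/h and |e·(u×v)| < 4s}) ≤ C·s·|log s|. -/

import Mathlib

open MeasureTheory ProbabilityTheory InnerProductGeometry Real Set
open scoped ENNReal NNReal

noncomputable section

abbrev E3 : Type := EuclideanSpace ℝ (Fin 3)
abbrev S2 : Type := Metric.sphere (0 : E3) 1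

/-- Uniform (normalized) probability measure on the unit sphere `S²`. -/
noncomputable def uniformS2 : Measure S2 :=
  ((volume : Measure E3).toSphere Set.univ)⁻¹ • (volume : Measure E3).toSphere

/-- Uniform measure on `S²`, viewed as a measure on `ℝ³` (supported on the sphere). -/
noncomputable def uniformS2amb : Measure E3 := uniformS2.map Subtype.val

/-- Cross product on `ℝ³`. -/
noncomputable def cross3 (u v : E3) : E3 :=
  (WithLp.equiv 2 (Fin 3 → ℝ)).symm
    (crossProduct ((WithLp.equiv 2 (Fin 3 → ℝ)) u) ((WithLp.equiv 2 (Fin 3 → ℝ)) v))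

/-- The flat measure `λ = (uniform) × (Lebesgue on ℝ₊) × (uniform)` on `𝔻 = S² × ℝ₊ × S²`. -/
noncomputable def lamD : Measure (S2 × ℝ × S2) :=
  uniformS2.prod ((volume.restrict (Set.Ioi (0:ℝ))).prod uniformS2)

open scoped Pointwise

lemma norm_sq_eq3 (x : E3) : ‖x‖^2 = x 0^2 + x 1^2 + x 2^2 := by
  rw [← real_inner_self_eq_norm_sq, PiLp.inner_apply]; simp [Fin.sum_univ_three]

lemma parseval3 (b : OrthonormalBasis (Fin 3) ℝ E3) (x : E3) :
    ‖x‖^2 = (inner ℝ (b 0) x : ℝ)^2 + (inner ℝ (b 1) x : ℝ)^2 + (inner ℝ (b 2) x : ℝ)^2 := by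
  have h : ‖x‖ = ‖b.repr x‖ := (b.repr.norm_map x).symm
  rw [h, norm_sq_eq3]
  simp [b.repr_apply_apply]

lemma volume_box (b : OrthonormalBasis (Fin 3) ℝ E3) (t : Fin 3 → ℝ) :
    volume {x : E3 | ∀ i, |(inner ℝ (b i) x : ℝ)| ≤ t i}
      = ENNReal.ofReal (2 * t 0) * ENNReal.ofReal (2 * t 1) * ENNReal.ofReal (2 * t 2) := by
  have h1 : {x : E3 | ∀ i, |(inner ℝ (b i) x : ℝ)| ≤ t i}
      = b.repr ⁻¹' {y : EuclideanSpace ℝ (Fin 3) | ∀ i, |y i| ≤ t i} := by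
    ext x; simp [b.repr_apply_apply]
  have h2 : {y : EuclideanSpace ℝ (Fin 3) | ∀ i, |y i| ≤ t i}
      = ((MeasurableEquiv.toLp 2 (Fin 3 → ℝ)).symm) ⁻¹' (Set.pi Set.univ fun i => Icc (-t i) (t i)) := by
    ext y
    simp only [Set.mem_preimage, Set.mem_pi, Set.mem_univ, forall_true_left, Set.mem_Icc,
      Set.mem_setOf_eq, abs_le]
    rfl
  have hm : MeasurableSet (Set.pi Set.univ fun i : Fin 3 => Icc (-(t i)) (t i)) :=
    MeasurableSet.univ_pi fun i => measurableSet_Icc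
  rw [h1, b.measurePreserving_repr.measure_preimage (by rw [h2]; exact ((EuclideanSpace.volume_preserving_symm_measurableEquiv_toLp (Fin 3)).measurable hm).nullMeasurableSet)]
  rw [h2, (EuclideanSpace.volume_preserving_symm_measurableEquiv_toLp (Fin 3)).measure_preimage hm.nullMeasurableSet]
  rw [volume_pi_pi]
  simp [Real.volume_Icc, Fin.prod_univ_three]
  simp only [← two_mul, ENNReal.ofReal_mul (by norm_num : (0:ℝ) ≤ 2), ENNReal.ofReal_ofNat]

lemma finrank_E3 : Module.finrank ℝ E3 = 3 := by simp

lemma volume_ball_ge : (1:ℝ≥0∞) ≤ volume (Metric.ball (0:E3) 1) := by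
  set b := EuclideanSpace.basisFun (Fin 3) ℝ
  have hsub : {x : E3 | ∀ i, |(inner ℝ (b i) x : ℝ)| ≤ 1/2} ⊆ Metric.ball (0:E3) 1 := by
    intro x hx
    simp only [Metric.mem_ball, dist_zero_right]
    have h := parseval3 b x
    have h0 := hx 0; have h1 := hx 1; have h2 := hx 2
    have : ‖x‖^2 ≤ 3/4 := by
      rw [h]
      nlinarith [abs_le.1 h0, abs_le.1 h1, abs_le.1 h2, sq_abs ((inner ℝ (b 0) x : ℝ)), sq_abs ((inner ℝ (b 1) x : ℝ)), sq_abs ((inner ℝ (b 2) x : ℝ))]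
    nlinarith [norm_nonneg x]
  calc (1:ℝ≥0∞) = volume {x : E3 | ∀ i, |(inner ℝ (b i) x : ℝ)| ≤ 1/2} := by
        rw [volume_box]; norm_num
    _ ≤ _ := measure_mono hsub

/-- Master cone lemma: if the cone over `A` (inside the unit ball) is contained in `B`,
then `uniformS2 A ≤ volume B`. -/
lemma uniformS2_le_volume {A : Set S2} (hA : MeasurableSet A) {B : Set E3}
    (h : ∀ v : S2, v ∈ A → ∀ r : ℝ, 0 < r → r < 1 → r • (v : E3) ∈ B) :
    uniformS2 A ≤ volume B := by
  have hcone : (Set.Ioo (0:ℝ) 1) • (Subtype.val '' A) ⊆ B := by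
    rintro x hx
    rw [Set.mem_smul] at hx
    obtain ⟨r, hr, y, hy, rfl⟩ := hx
    obtain ⟨v, hv, rfl⟩ := hy
    exact h v hv r hr.1 hr.2
  have hts : (volume : Measure E3).toSphere A ≤ 3 * volume B := by
    rw [Measure.toSphere_apply' _ hA, finrank_E3]
    push_cast
    exact mul_le_mul_right (measure_mono hcone) 3
  have htu : (volume : Measure E3).toSphere Set.univ = 3 * volume (Metric.ball (0:E3) 1) := by
    rw [Measure.toSphere_apply_univ, finrank_E3]; push_cast; ring
  rw [uniformS2, Measure.smul_apply, smul_eq_mul, htu]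
  calc (3 * volume (Metric.ball (0:E3) 1))⁻¹ * (volume : Measure E3).toSphere A
      ≤ (3 * 1)⁻¹ * (3 * volume B) := by
        refine mul_le_mul' ?_ hts
        exact ENNReal.inv_le_inv.2 (mul_le_mul_right volume_ball_ge 3)
    _ = volume B := by
        rw [mul_one, ← mul_assoc, ENNReal.inv_mul_cancel (by norm_num) (by norm_num), one_mul]

lemma inner3 (x y : E3) : (inner ℝ x y : ℝ) = x 0 * y 0 + x 1 * y 1 + x 2 * y 2 := by
  simp [PiLp.inner_apply, Fin.sum_univ_three]; ring

lemma cross3_apply (u v : E3) (i : Fin 3) :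
    cross3 u v i = ![u 1 * v 2 - u 2 * v 1, u 2 * v 0 - u 0 * v 2, u 0 * v 1 - u 1 * v 0] i := by
  simp [cross3, cross_apply]

lemma triple_prod (e u v : E3) : (inner ℝ e (cross3 u v) : ℝ) = inner ℝ v (cross3 e u) := by
  simp only [inner3, cross3_apply]
  simp [Fin.isValue]
  ring

lemma inner_cross_right (e u : E3) : (inner ℝ u (cross3 e u) : ℝ) = 0 := by
  simp only [inner3, cross3_apply]; simp; ring

lemma norm_cross_sq (e u : E3) (he : ‖e‖ = 1) (hu : ‖u‖ = 1) :
    ‖cross3 e u‖^2 = 1 - (inner ℝ e u : ℝ)^2 := by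
  have h1 : e 0^2 + e 1^2 + e 2^2 = 1 := by rw [← norm_sq_eq3, he]; norm_num
  have h2 : u 0^2 + u 1^2 + u 2^2 = 1 := by rw [← norm_sq_eq3, hu]; norm_num
  have := norm_sq_eq3 (cross3 e u)
  simp only [cross3_apply] at this
  rw [this, inner3]
  simp [Fin.isValue]
  nlinarith [sq_nonneg (e 0), sq_nonneg (e 1)]

lemma abs_le_sqrt' {x y : ℝ} (h : x^2 ≤ y) : |x| ≤ Real.sqrt y := by
  rw [← Real.sqrt_sq_eq_abs]; exact Real.sqrt_le_sqrt h

lemma onb_ext2 {u w : E3} (hu : ‖u‖ = 1) (hw : ‖w‖ = 1) (huw : (inner ℝ u w : ℝ) = 0) :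
    ∃ b : OrthonormalBasis (Fin 3) ℝ E3, b 0 = u ∧ b 1 = w := by
  have hcard : Module.finrank ℝ E3 = Fintype.card (Fin 3) := by simp
  have huu : (inner ℝ u u : ℝ) = 1 := by rw [real_inner_self_eq_norm_sq, hu]; norm_num
  have hww : (inner ℝ w w : ℝ) = 1 := by rw [real_inner_self_eq_norm_sq, hw]; norm_num
  have hwu : (inner ℝ w u : ℝ) = 0 := by rw [real_inner_comm]; exact huw
  have horth : Orthonormal ℝ (({0, 1} : Set (Fin 3)).restrict ![u, w, u]) := by
    rw [orthonormal_iff_ite]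
    rintro ⟨i, hi⟩ ⟨j, hj⟩
    simp only [Set.mem_insert_iff, Set.mem_singleton_iff] at hi hj
    rcases hi with rfl | rfl <;> rcases hj with rfl | rfl <;>
      simp [Set.restrict, Subtype.ext_iff, huu, hww, huw, hwu, hu, hw]
  obtain ⟨b, hb⟩ := horth.exists_orthonormalBasis_extension_of_card_eq hcard
  exact ⟨b, hb 0 (by simp), hb 1 (by simp)⟩

lemma onb_ext1 {u : E3} (hu : ‖u‖ = 1) :
    ∃ b : OrthonormalBasis (Fin 3) ℝ E3, b 0 = u := by
  have hcard : Module.finrank ℝ E3 = Fintype.card (Fin 3) := by simp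
  have horth : Orthonormal ℝ (({0} : Set (Fin 3)).restrict ![u, u, u]) := by
    rw [orthonormal_iff_ite]
    rintro ⟨i, hi⟩ ⟨j, hj⟩
    simp only [Set.mem_singleton_iff] at hi hj
    subst hi; subst hj
    have huu : (inner ℝ u u : ℝ) = 1 := by rw [real_inner_self_eq_norm_sq, hu]; norm_num
    simp [Set.restrict, Subtype.ext_iff, huu, hu]
  obtain ⟨b, hb⟩ := horth.exists_orthonormalBasis_extension_of_card_eq hcard
  exact ⟨b, hb 0 (by simp)⟩

lemma normS2 (v : S2) : ‖(v : E3)‖ = 1 := by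
  have := v.2; rwa [mem_sphere_zero_iff_norm] at this

lemma measA1 (w : E3) (τ : ℝ) : MeasurableSet {v : S2 | |(inner ℝ w (v:E3) : ℝ)| ≤ τ} := by
  have : Continuous fun v : S2 => |(inner ℝ w (v:E3) : ℝ)| :=
    (Continuous.inner continuous_const continuous_subtype_val).abs
  exact measurableSet_le this.measurable measurable_const

lemma measA2 (c : E3) (γ : ℝ) : MeasurableSet {v : S2 | γ ≤ (inner ℝ c (v:E3) : ℝ)} := by
  have : Continuous fun v : S2 => (inner ℝ c (v:E3) : ℝ) :=
    Continuous.inner continuous_const continuous_subtype_val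
  exact measurableSet_le measurable_const this.measurable

/-- L2: cap bound. -/
lemma cap_bound {c : E3} (hc : ‖c‖ = 1) {γ : ℝ} (hγ0 : 0 ≤ γ) (hγ1 : γ ≤ 1) :
    uniformS2 {v : S2 | γ ≤ (inner ℝ c (v:E3) : ℝ)} ≤ ENNReal.ofReal (8 * (1 - γ^2)) := by
  obtain ⟨b, hb0⟩ := onb_ext1 hc
  set σ : ℝ := Real.sqrt (1 - γ^2) with hσ
  have hσ0 : 0 ≤ σ := Real.sqrt_nonneg _
  have hσ2 : σ^2 = 1 - γ^2 := Real.sq_sqrt (by nlinarith)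
  calc uniformS2 {v : S2 | γ ≤ (inner ℝ c (v:E3) : ℝ)}
      ≤ volume {x : E3 | ∀ i, |(inner ℝ (b i) x : ℝ)| ≤ ![1, σ, σ] i} := by
        refine uniformS2_le_volume (measA2 c γ) ?_
        intro v hv r hr0 hr1
        have hnv := normS2 v
        have hcs : ∀ y : E3, ‖y‖ = 1 → |(inner ℝ y (r • (v:E3)) : ℝ)| ≤ r := by
          intro y hy
          calc |(inner ℝ y (r • (v:E3)) : ℝ)| ≤ ‖y‖ * ‖r • (v:E3)‖ := abs_real_inner_le_norm y _
          _ = r := by rw [hy, norm_smul, hnv]; simp [abs_of_pos hr0]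
        have hkey : (inner ℝ (b 1) (r • (v:E3)) : ℝ)^2 + (inner ℝ (b 2) (r • (v:E3)) : ℝ)^2
            ≤ 1 - γ^2 := by
          have hp := parseval3 b (r • (v:E3))
          have h0 : (inner ℝ (b 0) (r • (v:E3)) : ℝ) = r * inner ℝ c (v:E3) := by
            rw [hb0, real_inner_smul_right]
          have hiv : γ ≤ (inner ℝ c (v:E3) : ℝ) := hv
          have ht1 : |(inner ℝ c (v:E3) : ℝ)| ≤ 1 := by
            simpa [hc, hnv] using abs_real_inner_le_norm c (v:E3)
          have hn : ‖r • (v:E3)‖^2 = r^2 := by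
            rw [norm_smul, hnv, mul_one, Real.norm_eq_abs, sq_abs]
          have hr2 : r^2 ≤ 1 := by nlinarith
          have ht2 : (inner ℝ c (v:E3) : ℝ)^2 ≤ 1 := by
            nlinarith [abs_le.1 ht1]
          have hγ2 : γ^2 ≤ (inner ℝ c (v:E3) : ℝ)^2 := by nlinarith
          have h0sq : (inner ℝ (b 0) (r • (v:E3)) : ℝ)^2 = r^2 * (inner ℝ c (v:E3) : ℝ)^2 := by
            rw [h0]; ring
          nlinarith [mul_nonneg (by linarith : (0:ℝ) ≤ 1 - r^2)
            (by linarith : (0:ℝ) ≤ 1 - (inner ℝ c (v:E3) : ℝ)^2)]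
        intro i
        fin_cases i
        · simpa [hb0] using le_trans (hcs c hc) hr1.le
        · show |(inner ℝ (b 1) (r • (v:E3)) : ℝ)| ≤ σ
          exact abs_le_sqrt' (by nlinarith [sq_nonneg ((inner ℝ (b 2) (r • (v:E3)) : ℝ))])
        · show |(inner ℝ (b 2) (r • (v:E3)) : ℝ)| ≤ σ
          exact abs_le_sqrt' (by nlinarith [sq_nonneg ((inner ℝ (b 1) (r • (v:E3)) : ℝ))])
    _ = ENNReal.ofReal (8 * (1 - γ^2)) := by
        rw [volume_box]
        have e0 : (![1, σ, σ] : Fin 3 → ℝ) 0 = 1 := rfl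
        have e1 : (![1, σ, σ] : Fin 3 → ℝ) 1 = σ := rfl
        have e2 : (![1, σ, σ] : Fin 3 → ℝ) 2 = σ := rfl
        rw [e0, e1, e2, ← ENNReal.ofReal_mul (by norm_num),
          ← ENNReal.ofReal_mul (by positivity),
          show (2:ℝ) * 1 * (2 * σ) * (2 * σ) = 8 * σ^2 by ring, hσ2]

/-- L1: slab bound. -/
lemma slab_bound {w : E3} (hw : w ≠ 0) {τ : ℝ} (hτ : 0 ≤ τ) :
    uniformS2 {v : S2 | |(inner ℝ w (v:E3) : ℝ)| ≤ τ} ≤ ENNReal.ofReal (8 * (τ / ‖w‖)) := by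
  have hnw : 0 < ‖w‖ := norm_pos_iff.2 hw
  set wh : E3 := ‖w‖⁻¹ • w with hwh
  have hwhn : ‖wh‖ = 1 := by
    rw [hwh, norm_smul, norm_inv, norm_norm, inv_mul_cancel₀ hnw.ne']
  obtain ⟨b, hb0⟩ := onb_ext1 hwhn
  calc uniformS2 {v : S2 | |(inner ℝ w (v:E3) : ℝ)| ≤ τ}
      ≤ volume {x : E3 | ∀ i, |(inner ℝ (b i) x : ℝ)| ≤ ![τ / ‖w‖, 1, 1] i} := by
        refine uniformS2_le_volume (measA1 w τ) ?_
        intro v hv r hr0 hr1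
        have hnv := normS2 v
        have hxn : ‖r • (v:E3)‖ = r := by
          rw [norm_smul, hnv, mul_one, Real.norm_eq_abs, abs_of_pos hr0]
        intro i
        fin_cases i
        · show |(inner ℝ (b 0) (r • (v:E3)) : ℝ)| ≤ τ / ‖w‖
          rw [hb0, hwh, real_inner_smul_left, real_inner_smul_right, abs_mul, abs_mul,
            abs_of_nonneg (inv_nonneg.2 hnw.le), abs_of_pos hr0]
          rw [div_eq_inv_mul]
          have : r * |(inner ℝ w (v:E3) : ℝ)| ≤ τ := by
            calc r * |(inner ℝ w (v:E3) : ℝ)| ≤ 1 * τ := by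
                  apply mul_le_mul hr1.le hv (abs_nonneg _) zero_le_one
            _ = τ := one_mul τ
          calc ‖w‖⁻¹ * (r * |(inner ℝ w (v:E3) : ℝ)|) ≤ ‖w‖⁻¹ * τ :=
                mul_le_mul_of_nonneg_left this (inv_nonneg.2 hnw.le)
          _ = _ := rfl
        · show |(inner ℝ (b 1) (r • (v:E3)) : ℝ)| ≤ 1
          calc |(inner ℝ (b 1) (r • (v:E3)) : ℝ)| ≤ ‖b 1‖ * ‖r • (v:E3)‖ :=
                abs_real_inner_le_norm _ _
          _ ≤ 1 := by rw [b.orthonormal.1 1, hxn, one_mul]; exact hr1.le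
        · show |(inner ℝ (b 2) (r • (v:E3)) : ℝ)| ≤ 1
          calc |(inner ℝ (b 2) (r • (v:E3)) : ℝ)| ≤ ‖b 2‖ * ‖r • (v:E3)‖ :=
                abs_real_inner_le_norm _ _
          _ ≤ 1 := by rw [b.orthonormal.1 2, hxn, one_mul]; exact hr1.le
    _ = ENNReal.ofReal (8 * (τ / ‖w‖)) := by
        rw [volume_box]
        have e0 : (![τ / ‖w‖, 1, 1] : Fin 3 → ℝ) 0 = τ / ‖w‖ := rfl
        have e1 : (![τ / ‖w‖, 1, 1] : Fin 3 → ℝ) 1 = 1 := rfl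
        have e2 : (![τ / ‖w‖, 1, 1] : Fin 3 → ℝ) 2 = 1 := rfl
        rw [e0, e1, e2, ← ENNReal.ofReal_mul (by positivity),
          ← ENNReal.ofReal_mul (by positivity)]
        congr 1; ring

set_option maxHeartbeats 2000000 in
/-- L3: cap ∩ slab bound. -/
lemma capslab_bound {u w : E3} (hu : ‖u‖ = 1) (hw : w ≠ 0) (huw : (inner ℝ u w : ℝ) = 0)
    {α τ : ℝ} (hα : 0 < α) (hτ : 0 ≤ τ) :
    uniformS2 {v : S2 | Real.cos α ≤ (inner ℝ (-u) (v:E3) : ℝ) ∧ |(inner ℝ w (v:E3) : ℝ)| ≤ τ}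
      ≤ ENNReal.ofReal (8 * (τ / ‖w‖) * min α 1) := by
  have hnw : 0 < ‖w‖ := norm_pos_iff.2 hw
  set wh : E3 := ‖w‖⁻¹ • w with hwh
  have hwhn : ‖wh‖ = 1 := by
    rw [hwh, norm_smul, norm_inv, norm_norm, inv_mul_cancel₀ hnw.ne']
  have huwh : (inner ℝ u wh : ℝ) = 0 := by rw [hwh, real_inner_smul_right, huw, mul_zero]
  obtain ⟨b, hb0, hb1⟩ := onb_ext2 hu hwhn huwh
  have hmeas : MeasurableSet {v : S2 | Real.cos α ≤ (inner ℝ (-u) (v:E3) : ℝ) ∧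
      |(inner ℝ w (v:E3) : ℝ)| ≤ τ} := (measA2 (-u) (Real.cos α)).inter (measA1 w τ)
  have hmin : 0 ≤ min α 1 := le_min hα.le zero_le_one
  calc uniformS2 _
      ≤ volume {x : E3 | ∀ i, |(inner ℝ (b i) x : ℝ)| ≤ ![1, τ / ‖w‖, min α 1] i} := by
        refine uniformS2_le_volume hmeas ?_
        rintro v ⟨hv1, hv2⟩ r hr0 hr1
        have hnv := normS2 v
        have hxn : ‖r • (v:E3)‖ = r := by
          rw [norm_smul, hnv, mul_one, Real.norm_eq_abs, abs_of_pos hr0]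
        intro i
        fin_cases i
        · show |(inner ℝ (b 0) (r • (v:E3)) : ℝ)| ≤ 1
          calc |(inner ℝ (b 0) (r • (v:E3)) : ℝ)| ≤ ‖b 0‖ * ‖r • (v:E3)‖ :=
                abs_real_inner_le_norm _ _
          _ ≤ 1 := by rw [b.orthonormal.1 0, hxn, one_mul]; exact hr1.le
        · show |(inner ℝ (b 1) (r • (v:E3)) : ℝ)| ≤ τ / ‖w‖
          rw [hb1, hwh, real_inner_smul_left, real_inner_smul_right, abs_mul, abs_mul,
            abs_of_nonneg (inv_nonneg.2 hnw.le), abs_of_pos hr0, div_eq_inv_mul]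
          have : r * |(inner ℝ w (v:E3) : ℝ)| ≤ τ := by
            calc r * |(inner ℝ w (v:E3) : ℝ)| ≤ 1 * τ :=
                  mul_le_mul hr1.le hv2 (abs_nonneg _) zero_le_one
            _ = τ := one_mul τ
          exact mul_le_mul_of_nonneg_left this (inv_nonneg.2 hnw.le)
        · show |(inner ℝ (b 2) (r • (v:E3)) : ℝ)| ≤ min α 1
          have hb2n : |(inner ℝ (b 2) (r • (v:E3)) : ℝ)| ≤ 1 := by
            calc |(inner ℝ (b 2) (r • (v:E3)) : ℝ)| ≤ ‖b 2‖ * ‖r • (v:E3)‖ :=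
                  abs_real_inner_le_norm _ _
            _ ≤ 1 := by rw [b.orthonormal.1 2, hxn, one_mul]; exact hr1.le
          rcases le_or_gt 1 α with h1α | h1α
          · rw [min_eq_right h1α]; exact hb2n
          -- now α < 1, so cos α > 0
          have hcosα : 0 < Real.cos α := Real.cos_pos_of_mem_Ioo
            ⟨by linarith [Real.pi_gt_three], by linarith [Real.pi_gt_three]⟩
          rw [min_eq_left h1α.le]
          have hp := parseval3 b (r • (v:E3))
          have hn : ‖r • (v:E3)‖^2 = r^2 := by rw [hxn]
          have h0 : (inner ℝ (b 0) (r • (v:E3)) : ℝ) = - (r * (inner ℝ (-u) (v:E3) : ℝ)) := by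
            rw [hb0, real_inner_smul_right, inner_neg_left]; ring
          have hcap : Real.cos α * r ≤ r * (inner ℝ (-u) (v:E3) : ℝ) := by
            calc Real.cos α * r ≤ (inner ℝ (-u) (v:E3) : ℝ) * r :=
                  mul_le_mul_of_nonneg_right hv1 hr0.le
            _ = _ := mul_comm _ _
          have h0sq : (inner ℝ (b 0) (r • (v:E3)) : ℝ)^2 ≥ r^2 * Real.cos α^2 := by
            have : (inner ℝ (b 0) (r • (v:E3)) : ℝ)^2 = (r * (inner ℝ (-u) (v:E3) : ℝ))^2 := by
              rw [h0]; ring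
            rw [this]
            nlinarith [mul_pos hcosα hr0]
          have hr2 : r^2 ≤ 1 := pow_le_one₀ hr0.le hr1.le
          have hsin1 : (inner ℝ (b 2) (r • (v:E3)) : ℝ)^2 ≤ r^2 * (1 - Real.cos α^2) := by
            have h2nn := sq_nonneg ((inner ℝ (b 1) (r • (v:E3)) : ℝ))
            nlinarith [hp, hn, h0sq]
          have hsin2 : r^2 * (1 - Real.cos α^2) ≤ Real.sin α^2 := by
            rw [Real.sin_sq]
            exact mul_le_of_le_one_left (by nlinarith [Real.sin_sq α, sq_nonneg (Real.sin α)]) hr2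
          have hsinα : Real.sin α ≤ α := Real.sin_le hα.le
          have hsinα0 : 0 ≤ Real.sin α := Real.sin_nonneg_of_nonneg_of_le_pi hα.le
            (by linarith [Real.pi_gt_three])
          have habs : |(inner ℝ (b 2) (r • (v:E3)) : ℝ)| ≤ Real.sin α := by
            rw [← Real.sqrt_sq hsinα0]
            exact abs_le_sqrt' (le_trans hsin1 hsin2)
          linarith
    _ = ENNReal.ofReal (8 * (τ / ‖w‖) * min α 1) := by
        rw [volume_box]
        have e0 : (![1, τ / ‖w‖, min α 1] : Fin 3 → ℝ) 0 = 1 := rfl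
        have e1 : (![1, τ / ‖w‖, min α 1] : Fin 3 → ℝ) 1 = τ / ‖w‖ := rfl
        have e2 : (![1, τ / ‖w‖, min α 1] : Fin 3 → ℝ) 2 = min α 1 := rfl
        rw [e0, e1, e2, ← ENNReal.ofReal_mul (by norm_num),
          ← ENNReal.ofReal_mul (by positivity)]
        congr 1; ring

instance uniformS2_prob : IsProbabilityMeasure uniformS2 := by
  constructor
  have h3 : (volume : Measure E3).toSphere Set.univ = 3 * volume (Metric.ball (0:E3) 1) := by
    rw [Measure.toSphere_apply_univ]; simp
  have hne0 : (volume : Measure E3).toSphere Set.univ ≠ 0 := by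
    rw [h3]
    exact (ENNReal.mul_pos (by norm_num)
      (lt_of_lt_of_le zero_lt_one volume_ball_ge).ne').ne'
  have hnetop : (volume : Measure E3).toSphere Set.univ ≠ ⊤ := measure_ne_top _ _
  rw [uniformS2, Measure.smul_apply, smul_eq_mul, ENNReal.inv_mul_cancel hne0 hnetop]

lemma m_small {eE : E3} (he : ‖eE‖ = 1) {τ : ℝ} (hτ0 : 0 ≤ τ) (hτ1 : τ ≤ 1) :
    uniformS2 {u : S2 | ‖cross3 eE (u:E3)‖ ≤ τ} ≤ ENNReal.ofReal (16 * τ^2) := by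
  set γ := Real.sqrt (1 - τ^2) with hγ
  have hγ0 : 0 ≤ γ := Real.sqrt_nonneg _
  have hγ1 : γ ≤ 1 := Real.sqrt_le_one.2 (by nlinarith)
  have hγ2 : γ^2 = 1 - τ^2 := Real.sq_sqrt (by nlinarith)
  have hsub : {u : S2 | ‖cross3 eE (u:E3)‖ ≤ τ} ⊆
      {u : S2 | γ ≤ (inner ℝ eE (u:E3) : ℝ)} ∪ {u : S2 | γ ≤ (inner ℝ (-eE) (u:E3) : ℝ)} := by
    intro u hu
    have hnu := normS2 u
    have hu' : ‖cross3 eE (u:E3)‖ ≤ τ := hu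
    have hm : ‖cross3 eE (u:E3)‖^2 ≤ τ^2 := by
      have := norm_nonneg (cross3 eE (u:E3)); nlinarith
    have hx2 : γ^2 ≤ (inner ℝ eE (u:E3) : ℝ)^2 := by
      have := norm_cross_sq eE (u:E3) he hnu; nlinarith
    have habs : γ ≤ |(inner ℝ eE (u:E3) : ℝ)| := by
      have := abs_le_sqrt' (le_refl ((inner ℝ eE (u:E3) : ℝ)^2))
      calc γ = Real.sqrt (γ^2) := (Real.sqrt_sq hγ0).symm
      _ ≤ Real.sqrt ((inner ℝ eE (u:E3) : ℝ)^2) := Real.sqrt_le_sqrt hx2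
      _ = |(inner ℝ eE (u:E3) : ℝ)| := Real.sqrt_sq_eq_abs _
    rcases abs_cases ((inner ℝ eE (u:E3) : ℝ)) with ⟨hc, _⟩ | ⟨hc, _⟩
    · left; exact le_trans habs (le_of_eq hc)
    · right
      show γ ≤ (inner ℝ (-eE) (u:E3) : ℝ)
      rw [inner_neg_left]
      exact le_trans habs (le_of_eq hc)
  calc uniformS2 {u : S2 | ‖cross3 eE (u:E3)‖ ≤ τ}
      ≤ uniformS2 ({u : S2 | γ ≤ (inner ℝ eE (u:E3) : ℝ)} ∪
          {u : S2 | γ ≤ (inner ℝ (-eE) (u:E3) : ℝ)}) := measure_mono hsub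
    _ ≤ uniformS2 {u : S2 | γ ≤ (inner ℝ eE (u:E3) : ℝ)} +
          uniformS2 {u : S2 | γ ≤ (inner ℝ (-eE) (u:E3) : ℝ)} := measure_union_le _ _
    _ ≤ ENNReal.ofReal (8 * (1 - γ^2)) + ENNReal.ofReal (8 * (1 - γ^2)) := by
        gcongr
        · exact cap_bound he hγ0 hγ1
        · exact cap_bound (by rw [norm_neg]; exact he) hγ0 hγ1
    _ = ENNReal.ofReal (16 * τ^2) := by
        rw [← ENNReal.ofReal_add (by nlinarith) (by nlinarith)]
        rw [hγ2]; congr 1; ring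

lemma lint_Ioc_inv {a b : ℝ} (ha : 0 < a) (hab : a ≤ b) :
    ∫⁻ h in Ioc a b, ENNReal.ofReal h⁻¹ ≤ ENNReal.ofReal (Real.log (b/a)) := by
  have hb : 0 < b := lt_of_lt_of_le ha hab
  have hcont : ContinuousOn (fun h : ℝ => h⁻¹) (Icc a b) :=
    ContinuousOn.inv₀ continuousOn_id fun x hx => (lt_of_lt_of_le ha hx.1).ne'
  have hint : IntegrableOn (fun h : ℝ => h⁻¹) (Ioc a b) :=
    (hcont.integrableOn_compact isCompact_Icc).mono_set Ioc_subset_Icc_self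
  rw [← ofReal_integral_eq_lintegral_ofReal hint]
  · apply ENNReal.ofReal_le_ofReal
    rw [← intervalIntegral.integral_of_le hab, integral_inv_of_pos ha hb]
  · filter_upwards [ae_restrict_mem measurableSet_Ioc] with x hx
    exact inv_nonneg.2 (ha.trans hx.1).le

lemma lint_Ioi_invsq {T : ℝ} (hT : 0 < T) :
    ∫⁻ h in Ioi T, ENNReal.ofReal ((h^2)⁻¹) ≤ ENNReal.ofReal T⁻¹ := by
  have hco : ∀ h ∈ Ioi T, ENNReal.ofReal ((h^2)⁻¹) = ENNReal.ofReal (h ^ (-2:ℝ)) := by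
    intro h hh
    have h0 : 0 < h := lt_trans hT hh
    rw [Real.rpow_neg h0.le, show ((2:ℝ) = ((2:ℕ):ℝ)) by norm_num, Real.rpow_natCast]
  rw [setLIntegral_congr_fun measurableSet_Ioi hco]
  have hint : IntegrableOn (fun h : ℝ => h ^ (-2:ℝ)) (Ioi T) :=
    integrableOn_Ioi_rpow_of_lt (by norm_num) hT
  rw [← ofReal_integral_eq_lintegral_ofReal hint]
  · apply ENNReal.ofReal_le_ofReal
    rw [integral_Ioi_rpow_of_lt (by norm_num) hT]
    rw [show (-2:ℝ) + 1 = -1 by norm_num, Real.rpow_neg_one]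
    rw [div_neg, neg_div, neg_neg]
    simp
  · filter_upwards [ae_restrict_mem measurableSet_Ioi] with x hx
    exact Real.rpow_nonneg (lt_trans hT hx).le _

lemma G_bound {s mv : ℝ} (hs : 0 < s) (hs2 : s ≤ 1/2) (hm : 0 < mv) (hm1 : mv ≤ 1)
    (F : ℝ → ℝ≥0∞)
    (hF1 : ∀ h : ℝ, 0 < h → F h ≤ ENNReal.ofReal (32*s/mv))
    (hF2 : ∀ h : ℝ, 2 ≤ h → F h ≤ ENNReal.ofReal (64*s/(mv*h)))
    (hF3 : ∀ h : ℝ, 2 ≤ h → F h ≤ ENNReal.ofReal (32/h^2)) :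
    ∫⁻ h in Ioi (0:ℝ), F h ≤ ENNReal.ofReal ((64*s/mv) * (2 + |Real.log s|)) := by
  set T : ℝ := 2 + mv/(2*s) with hT
  have hmv2s : 0 < mv/(2*s) := by positivity
  have hT2 : 2 < T := by rw [hT]; linarith
  set c : ℝ := 64*s/mv with hc
  have hc0 : 0 ≤ c := by positivity
  have hmono : ∫⁻ h in Ioi (0:ℝ), F h ≤ ∫⁻ h in Ioi (0:ℝ),
      ((Ioc (0:ℝ) 2).indicator (fun _ => ENNReal.ofReal (32*s/mv)) h
        + (Ioc (2:ℝ) T).indicator (fun x => ENNReal.ofReal c * ENNReal.ofReal x⁻¹) h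
        + (Ioi T).indicator (fun x => ENNReal.ofReal 32 * ENNReal.ofReal ((x^2)⁻¹)) h) := by
    apply lintegral_mono_ae
    filter_upwards [ae_restrict_mem measurableSet_Ioi] with h hh
    rcases le_or_gt h 2 with h2 | h2
    · have hmem : (Ioc (0:ℝ) 2).indicator (fun _ => ENNReal.ofReal (32*s/mv)) h
          = ENNReal.ofReal (32*s/mv) := Set.indicator_of_mem (Set.mem_Ioc.mpr ⟨hh, h2⟩) _
      calc F h ≤ ENNReal.ofReal (32*s/mv) := hF1 h hh
      _ ≤ _ := by rw [hmem] at *; exact le_add_right (le_add_right le_rfl)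
    · rcases le_or_gt h T with hT' | hT'
      · have hmem : (Ioc (2:ℝ) T).indicator
            (fun x => ENNReal.ofReal c * ENNReal.ofReal x⁻¹) h
            = ENNReal.ofReal c * ENNReal.ofReal h⁻¹ := Set.indicator_of_mem (Set.mem_Ioc.mpr ⟨h2, hT'⟩) _
        calc F h ≤ ENNReal.ofReal (64*s/(mv*h)) := hF2 h h2.le
        _ ≤ ENNReal.ofReal c * ENNReal.ofReal h⁻¹ := by
            rw [← ENNReal.ofReal_mul hc0]
            apply ENNReal.ofReal_le_ofReal
            rw [hc]
            apply le_of_eq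
            field_simp
        _ ≤ _ := by rw [hmem]; exact le_add_right (le_add_left le_rfl)
      · have hmem : (Ioi T).indicator
            (fun x => ENNReal.ofReal 32 * ENNReal.ofReal ((x^2)⁻¹)) h
            = ENNReal.ofReal 32 * ENNReal.ofReal ((h^2)⁻¹) := Set.indicator_of_mem (Set.mem_Ioi.mpr hT') _
        calc F h ≤ ENNReal.ofReal (32/h^2) := hF3 h (by linarith)
        _ ≤ ENNReal.ofReal 32 * ENNReal.ofReal ((h^2)⁻¹) := by
            rw [← ENNReal.ofReal_mul (by norm_num)]
            exact ENNReal.ofReal_le_ofReal (le_of_eq (div_eq_mul_inv _ _))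
        _ ≤ _ := by rw [hmem]; exact le_add_left le_rfl
  have hmeas1 : Measurable ((Ioc (0:ℝ) 2).indicator
      (fun _ : ℝ => ENNReal.ofReal (32*s/mv))) :=
    measurable_const.indicator measurableSet_Ioc
  have hmeas2 : Measurable ((Ioc (2:ℝ) T).indicator
      (fun x : ℝ => ENNReal.ofReal c * ENNReal.ofReal x⁻¹)) :=
    (measurable_const.mul (measurable_inv.ennreal_ofReal)).indicator measurableSet_Ioc
  have hmeas3 : Measurable ((Ioi T).indicator
      (fun x : ℝ => ENNReal.ofReal 32 * ENNReal.ofReal ((x^2)⁻¹))) :=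
    (measurable_const.mul (((measurable_id.pow_const 2).inv).ennreal_ofReal)).indicator
      measurableSet_Ioi
  have hsplit : ∫⁻ h in Ioi (0:ℝ),
      ((Ioc (0:ℝ) 2).indicator (fun _ => ENNReal.ofReal (32*s/mv)) h
        + (Ioc (2:ℝ) T).indicator (fun x => ENNReal.ofReal c * ENNReal.ofReal x⁻¹) h
        + (Ioi T).indicator (fun x => ENNReal.ofReal 32 * ENNReal.ofReal ((x^2)⁻¹)) h)
      ≤ ENNReal.ofReal c + ENNReal.ofReal c * ENNReal.ofReal |Real.log s|
        + ENNReal.ofReal c := by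
    refine le_trans (setLIntegral_le_lintegral _ _) ?_
    rw [lintegral_add_right _ hmeas3, lintegral_add_right _ hmeas2]
    rw [lintegral_indicator measurableSet_Ioc, lintegral_indicator measurableSet_Ioc,
      lintegral_indicator measurableSet_Ioi]
    gcongr
    · rw [setLIntegral_const, Real.volume_Ioc]
      rw [← ENNReal.ofReal_mul (by positivity)]
      apply ENNReal.ofReal_le_ofReal
      rw [hc]
      rw [show ((2:ℝ) - 0) = 2 by norm_num]
      rw [div_mul_eq_mul_div, div_le_div_iff₀ hm hm]
      ring_nf
      nlinarith
    · rw [lintegral_const_mul _ measurable_inv.ennreal_ofReal]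
      apply mul_le_mul_right
      calc ∫⁻ h in Ioc (2:ℝ) T, ENNReal.ofReal h⁻¹ ≤ ENNReal.ofReal (Real.log (T/2)) :=
            lint_Ioc_inv (by norm_num) hT2.le
      _ ≤ ENNReal.ofReal |Real.log s| := by
          apply ENNReal.ofReal_le_ofReal
          have hTs : T * s ≤ 2 := by
            have he : T * s = 2*s + mv/2 := by rw [hT]; field_simp
            rw [he]; linarith
          have hTle : T/2 ≤ s⁻¹ := by
            rw [div_le_iff₀ (by norm_num : (0:ℝ) < 2), ← mul_le_mul_iff_of_pos_right hs,
              show s⁻¹ * 2 * s = 2 by field_simp]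
            exact hTs
          calc Real.log (T/2) ≤ Real.log s⁻¹ := Real.log_le_log (by positivity) hTle
          _ = -Real.log s := Real.log_inv s
          _ ≤ |Real.log s| := neg_le_abs _
    · rw [lintegral_const_mul _ (by fun_prop : Measurable fun x : ℝ => ENNReal.ofReal ((x^2)⁻¹))]
      calc ENNReal.ofReal 32 * ∫⁻ h in Ioi T, ENNReal.ofReal ((h^2)⁻¹)
          ≤ ENNReal.ofReal 32 * ENNReal.ofReal T⁻¹ :=
            mul_le_mul_right (lint_Ioi_invsq (by linarith)) _
      _ ≤ ENNReal.ofReal c := by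
          rw [← ENNReal.ofReal_mul (by norm_num)]
          apply ENNReal.ofReal_le_ofReal
          rw [hc, hT]
          have h1 : T⁻¹ ≤ (mv/(2*s))⁻¹ := by
            apply inv_anti₀ hmv2s
            rw [hT]; linarith
          calc 32 * T⁻¹ ≤ 32 * (mv/(2*s))⁻¹ := by linarith
          _ = 64*s/mv := by field_simp; ring
  refine le_trans (le_trans hmono hsplit) ?_
  rw [show c * (2 + |Real.log s|) = c + c * |Real.log s| + c by ring]
  rw [ENNReal.ofReal_add (by positivity) hc0, ENNReal.ofReal_add hc0 (by positivity),
    ENNReal.ofReal_mul hc0]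

lemma continuous_cross3_right (eE : E3) : Continuous fun x : E3 => cross3 eE x := by
  have h1 : Continuous fun y : Fin 3 → ℝ =>
      (crossProduct ((WithLp.equiv 2 (Fin 3 → ℝ)) eE)) y := by
    refine continuous_pi fun i => ?_
    simp only [cross_apply]
    fin_cases i <;> simp <;> fun_prop
  exact (PiLp.continuous_toLp 2 (fun _ : Fin 3 => ℝ)).comp
    (h1.comp (PiLp.continuous_ofLp 2 (fun _ : Fin 3 => ℝ)))

lemma continuous_mfun (eE : E3) : Continuous fun u : S2 => ‖cross3 eE (u:E3)‖ :=
  continuous_norm.comp ((continuous_cross3_right eE).comp continuous_subtype_val)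

lemma m_le_one {eE : E3} (he : ‖eE‖ = 1) (u : S2) : ‖cross3 eE (u:E3)‖ ≤ 1 := by
  have h := norm_cross_sq eE (u:E3) he (normS2 u)
  nlinarith [norm_nonneg (cross3 eE (u:E3)), sq_nonneg ((inner ℝ eE (u:E3) : ℝ))]

lemma null_m_zero {eE : E3} (he : ‖eE‖ = 1) :
    uniformS2 {u : S2 | ‖cross3 eE (u:E3)‖ = 0} = 0 := by
  have hb : ∀ k : ℕ, uniformS2 {u : S2 | ‖cross3 eE (u:E3)‖ = 0}
      ≤ ENNReal.ofReal (16 * ((1/2:ℝ)^k)^2) := by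
    intro k
    refine le_trans (measure_mono ?_) (m_small he (by positivity) (by
      apply pow_le_one₀ <;> norm_num))
    intro u hu
    simp only [Set.mem_setOf_eq] at hu ⊢
    rw [hu]; positivity
  have htend : Filter.Tendsto (fun k : ℕ => ENNReal.ofReal (16 * ((1/2:ℝ)^k)^2))
      Filter.atTop (nhds 0) := by
    rw [show (0:ℝ≥0∞) = ENNReal.ofReal 0 by simp]
    apply ENNReal.tendsto_ofReal
    have : Filter.Tendsto (fun k : ℕ => ((1/4:ℝ))^k) Filter.atTop (nhds 0) :=
      tendsto_pow_atTop_nhds_zero_of_lt_one (by norm_num) (by norm_num)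
    have h16 := this.const_mul (16:ℝ)
    simp only [mul_zero] at h16
    convert h16 using 2 with k
    rw [show (16:ℝ) * ((1/2)^k)^2 = 16 * ((1/2)^2)^k by rw [← pow_mul, ← pow_mul, mul_comm k 2]]
    norm_num
  exact le_antisymm (ge_of_tendsto' htend hb |>.trans_eq rfl) zero_le

lemma inv_m_integral {eE : E3} (he : ‖eE‖ = 1) :
    ∫⁻ u, ENNReal.ofReal (‖cross3 eE (u:E3)‖⁻¹) ∂uniformS2 ≤ 64 := by
  set m : S2 → ℝ := fun u => ‖cross3 eE (u:E3)‖ with hm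
  have hpoint : ∀ u : S2, ENNReal.ofReal ((m u)⁻¹) ≤
      ∑' k : ℕ, ENNReal.ofReal ((2:ℝ)^(k+1)) *
        ({u : S2 | m u ≤ (1/2:ℝ)^k}).indicator (fun _ => 1) u := by
    intro u
    rcases eq_or_lt_of_le (norm_nonneg _ : (0:ℝ) ≤ m u) with h0 | h0
    · have h0' : m u = 0 := h0.symm
      rw [h0']; simp
    · have hm1 : m u ≤ 1 := m_le_one he u
      have hex : ∃ n : ℕ, (1/2:ℝ)^n < m u := by
        obtain ⟨n, hn⟩ := exists_pow_lt_of_lt_one h0 (by norm_num : (1/2:ℝ) < 1)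
        exact ⟨n, hn⟩
      classical
      set n₀ := Nat.find hex with hn₀
      have hn₀spec : (1/2:ℝ)^n₀ < m u := Nat.find_spec hex
      have hn₀pos : 0 < n₀ := by
        rcases Nat.eq_zero_or_pos n₀ with h | h
        · exfalso; rw [h] at hn₀spec; simp at hn₀spec; linarith
        · exact h
      set k := n₀ - 1 with hk
      have hkn : k + 1 = n₀ := Nat.succ_pred_eq_of_pos hn₀pos
      have hmem : m u ≤ (1/2:ℝ)^k := by
        by_contra hcon
        push_neg at hcon
        exact Nat.find_min hex (by omega : k < n₀) hcon
      have hval : ENNReal.ofReal ((m u)⁻¹) ≤ ENNReal.ofReal ((2:ℝ)^(k+1)) := by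
        apply ENNReal.ofReal_le_ofReal
        rw [hkn]
        have h2 : (1/2:ℝ)^n₀ = ((2:ℝ)^n₀)⁻¹ := by
          rw [div_pow, one_pow, one_div]
        rw [h2] at hn₀spec
        calc (m u)⁻¹ ≤ ((2:ℝ)^n₀)⁻¹⁻¹ := by
              apply inv_anti₀ (by positivity) hn₀spec.le
        _ = (2:ℝ)^n₀ := inv_inv _
      calc ENNReal.ofReal ((m u)⁻¹) ≤ ENNReal.ofReal ((2:ℝ)^(k+1)) *
            ({u : S2 | m u ≤ (1/2:ℝ)^k}).indicator (fun _ => 1) u := by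
            have hind : ({u : S2 | m u ≤ (1/2:ℝ)^k}).indicator (fun _ => (1:ℝ≥0∞)) u = 1 :=
              Set.indicator_of_mem (show u ∈ {u : S2 | m u ≤ (1/2:ℝ)^k} from hmem) _
            rw [hind, mul_one]
            exact hval
      _ ≤ _ := ENNReal.le_tsum k
  calc ∫⁻ u, ENNReal.ofReal ((m u)⁻¹) ∂uniformS2
      ≤ ∫⁻ u, (∑' k : ℕ, ENNReal.ofReal ((2:ℝ)^(k+1)) *
          ({u : S2 | m u ≤ (1/2:ℝ)^k}).indicator (fun _ => 1) u) ∂uniformS2 :=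
        lintegral_mono hpoint
  _ = ∑' k : ℕ, ∫⁻ u, ENNReal.ofReal ((2:ℝ)^(k+1)) *
        ({u : S2 | m u ≤ (1/2:ℝ)^k}).indicator (fun _ => 1) u ∂uniformS2 := by
      apply lintegral_tsum
      intro k
      apply Measurable.aemeasurable
      apply Measurable.const_mul
      exact measurable_const.indicator
        (measurableSet_le (continuous_mfun eE).measurable measurable_const)
  _ ≤ ∑' k : ℕ, ENNReal.ofReal (32 * (1/2:ℝ)^k) := by
      apply ENNReal.tsum_le_tsum
      intro k
      have hmeas : MeasurableSet {u : S2 | m u ≤ (1/2:ℝ)^k} :=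
        measurableSet_le (continuous_mfun eE).measurable measurable_const
      rw [lintegral_const_mul _ (measurable_const.indicator hmeas)]
      rw [lintegral_indicator_const hmeas]
      calc ENNReal.ofReal ((2:ℝ)^(k+1)) * (1 * uniformS2 {u : S2 | m u ≤ (1/2:ℝ)^k})
          ≤ ENNReal.ofReal ((2:ℝ)^(k+1)) * ENNReal.ofReal (16 * ((1/2:ℝ)^k)^2) := by
            rw [one_mul]
            exact mul_le_mul_right (m_small he (by positivity)
              (pow_le_one₀ (by norm_num) (by norm_num))) _
      _ = ENNReal.ofReal (32 * (1/2:ℝ)^k) := by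
          rw [← ENNReal.ofReal_mul (by positivity)]
          congr 1
          rw [show ((2:ℝ)^(k+1) * (16 * ((1/2)^k)^2)) = 32 * ((2:ℝ)^k * ((1/2:ℝ)^k * (1/2:ℝ)^k)) by ring]
          rw [show ((2:ℝ)^k * ((1/2:ℝ)^k * (1/2:ℝ)^k)) = ((2*(1/2):ℝ))^k * (1/2:ℝ)^k by
            rw [mul_pow]; ring]
          norm_num
  _ ≤ 64 := by
      have : ∀ k : ℕ, ENNReal.ofReal (32 * (1/2:ℝ)^k) = 32 * (2⁻¹ : ℝ≥0∞)^k := by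
        intro k
        rw [ENNReal.ofReal_mul (by norm_num), ENNReal.ofReal_pow (by norm_num)]
        congr 1
        · norm_num
        · congr 1
          rw [show (1/2:ℝ) = (2:ℝ)⁻¹ by norm_num]
          rw [ENNReal.ofReal_inv_of_pos (by norm_num)]
          norm_num
      rw [tsum_congr this, ENNReal.tsum_mul_left, ENNReal.tsum_geometric,
        ENNReal.one_sub_inv_two, inv_inv]
      norm_num

set_option maxHeartbeats 1000000 in
theorem stmt_15 (e : S2) :
    ∃ C : ℝ, ∀ s ∈ Set.Ioc (0:ℝ) (1/2),
      lamD {p : S2 × ℝ × S2 | angle (-(p.1 : E3)) (p.2.2 : E3) ≤ 2 / p.2.1 ∧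
            |(inner ℝ ((e : E3)) (cross3 (p.1 : E3) (p.2.2 : E3)) : ℝ)| < 4 * s}
        ≤ ENNReal.ofReal (C * s * |Real.log s|) := by
  refine ⟨16384, fun s hs => ?_⟩
  obtain ⟨hs0, hs12⟩ := hs
  set eE : E3 := (e : E3) with heEdef
  have heE : ‖eE‖ = 1 := normS2 e
  set L : ℝ := |Real.log s| with hL
  -- rewrite the set using the triple product identity
  have hsetEq : {p : S2 × ℝ × S2 | angle (-(p.1 : E3)) (p.2.2 : E3) ≤ 2 / p.2.1 ∧
        |(inner ℝ (eE) (cross3 (p.1 : E3) (p.2.2 : E3)) : ℝ)| < 4 * s}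
      = {p : S2 × ℝ × S2 | angle (-(p.1 : E3)) (p.2.2 : E3) ≤ 2 / p.2.1 ∧
        |(inner ℝ ((p.2.2 : E3)) (cross3 eE (p.1 : E3)) : ℝ)| < 4 * s} := by
    ext p
    rw [Set.mem_setOf_eq, Set.mem_setOf_eq, triple_prod]
  rw [hsetEq]
  set S' : Set (S2 × ℝ × S2) := {p : S2 × ℝ × S2 |
      angle (-(p.1 : E3)) (p.2.2 : E3) ≤ 2 / p.2.1 ∧
      |(inner ℝ ((p.2.2 : E3)) (cross3 eE (p.1 : E3)) : ℝ)| < 4 * s} with hS'def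
  -- measurability
  have hcont1 : Continuous fun p : S2 × ℝ × S2 => angle (-(p.1 : E3)) (p.2.2 : E3) := by
    have hc1 : Continuous fun p : S2 × ℝ × S2 => (-(p.1 : E3)) :=
      (continuous_subtype_val.comp continuous_fst).neg
    have hc2 : Continuous fun p : S2 × ℝ × S2 => ((p.2.2 : E3)) :=
      continuous_subtype_val.comp (continuous_snd.comp continuous_snd)
    show Continuous fun p : S2 × ℝ × S2 =>
      Real.arccos ((inner ℝ (-(p.1 : E3)) ((p.2.2 : E3)) : ℝ) /
        (‖-(p.1 : E3)‖ * ‖((p.2.2 : E3))‖))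
    apply Real.continuous_arccos.comp
    apply Continuous.div (hc1.inner hc2) (hc1.norm.mul hc2.norm)
    intro p
    simp only [Pi.mul_apply, norm_neg, normS2]
    norm_num
  have hcont2 : Continuous fun p : S2 × ℝ × S2 =>
      |(inner ℝ ((p.2.2 : E3)) (cross3 eE (p.1 : E3)) : ℝ)| := by
    have hc2 : Continuous fun p : S2 × ℝ × S2 => ((p.2.2 : E3)) :=
      continuous_subtype_val.comp (continuous_snd.comp continuous_snd)
    have hc3 : Continuous fun p : S2 × ℝ × S2 => cross3 eE (p.1 : E3) :=
      (continuous_cross3_right eE).comp (continuous_subtype_val.comp continuous_fst)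
    exact (hc2.inner hc3).abs
  have hmeasdiv : Measurable fun p : S2 × ℝ × S2 => 2 / p.2.1 := by
    have h1 : Measurable fun p : S2 × ℝ × S2 => p.2.1 :=
      measurable_fst.comp measurable_snd
    exact measurable_const.div h1
  have hS' : MeasurableSet S' := by
    apply MeasurableSet.inter
    · exact measurableSet_le hcont1.measurable hmeasdiv
    · exact measurableSet_lt hcont2.measurable measurable_const
  -- product formula
  have hstep1 : lamD S' = ∫⁻ u, ((volume.restrict (Set.Ioi (0:ℝ))).prod uniformS2)
      (Prod.mk u ⁻¹' S') ∂uniformS2 := by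
    rw [lamD, Measure.prod_apply hS']
  have hstep2 : ∀ u : S2, ((volume.restrict (Set.Ioi (0:ℝ))).prod uniformS2)
      (Prod.mk u ⁻¹' S') = ∫⁻ h in Set.Ioi (0:ℝ),
        uniformS2 {v : S2 | angle (-(u : E3)) (v : E3) ≤ 2 / h ∧
          |(inner ℝ ((v : E3)) (cross3 eE (u : E3)) : ℝ)| < 4 * s} := by
    intro u
    rw [Measure.prod_apply (measurable_prodMk_left hS')]
    rfl
  -- pointwise bound in u, for a.e. u
  have hae : ∀ᵐ u ∂uniformS2, ((volume.restrict (Set.Ioi (0:ℝ))).prod uniformS2)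
      (Prod.mk u ⁻¹' S')
      ≤ ENNReal.ofReal (64*s*(2+L)) * ENNReal.ofReal (‖cross3 eE (u:E3)‖⁻¹) := by
    have hnull : ∀ᵐ (u : S2) ∂uniformS2, ‖cross3 eE (u:E3)‖ ≠ 0 := by
      rw [ae_iff]
      convert null_m_zero heE using 2
      ext u
      simp
    filter_upwards [hnull] with u hu
    set m : ℝ := ‖cross3 eE (u:E3)‖ with hmdef
    have hm0 : 0 < m := lt_of_le_of_ne (norm_nonneg _) (Ne.symm hu)
    have hm1 : m ≤ 1 := m_le_one heE u
    set w : E3 := cross3 eE (u:E3) with hwdef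
    have hwne : w ≠ 0 := fun hcon => hu (by rw [hmdef, hcon, norm_zero])
    have huw : (inner ℝ ((u:E3)) w : ℝ) = 0 := inner_cross_right eE (u:E3)
    have hun : ‖(u:E3)‖ = 1 := normS2 u
    set A : ℝ → Set S2 := fun h => {v : S2 | angle (-(u : E3)) (v : E3) ≤ 2 / h ∧
        |(inner ℝ ((v : E3)) (cross3 eE (u : E3)) : ℝ)| < 4 * s} with hAdef
    -- slab inclusion
    have hsub1 : ∀ h : ℝ, A h ⊆ {v : S2 | |(inner ℝ w ((v:E3)) : ℝ)| ≤ 4*s} := by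
      intro h v hv
      have h2 := hv.2
      rw [Set.mem_setOf_eq, real_inner_comm]
      exact h2.le
    have hF1 : ∀ h : ℝ, 0 < h → uniformS2 (A h) ≤ ENNReal.ofReal (32*s/m) := by
      intro h hh
      refine le_trans (measure_mono (hsub1 h)) (le_trans (slab_bound hwne (by positivity)) ?_)
      apply ENNReal.ofReal_le_ofReal
      rw [hmdef]
      apply le_of_eq
      ring
    have hF2 : ∀ h : ℝ, 2 ≤ h → uniformS2 (A h) ≤ ENNReal.ofReal (64*s/(m*h)) := by
      intro h hh
      have hh0 : 0 < h := by linarith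
      have h2h : 2/h ≤ 1 := by rw [div_le_one hh0]; linarith
      have hsub2 : A h ⊆ {v : S2 | Real.cos (2/h) ≤ (inner ℝ (-(u:E3)) ((v:E3)) : ℝ) ∧
          |(inner ℝ w ((v:E3)) : ℝ)| ≤ 4*s} := by
        intro v hv
        refine ⟨?_, hsub1 h hv⟩
        have hang := hv.1
        have hcos : Real.cos (2/h) ≤ Real.cos (angle (-(u:E3)) ((v:E3))) := by
          apply Real.cos_le_cos_of_nonneg_of_le_pi (angle_nonneg _ _)
          · calc (2:ℝ)/h ≤ 1 := h2h
            _ ≤ π := by linarith [Real.pi_gt_three]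
          · exact hang
        rw [cos_angle, norm_neg, hun, normS2 v] at hcos
        simpa using hcos
      refine le_trans (measure_mono hsub2)
        (le_trans (capslab_bound hun hwne huw (by positivity) (by positivity)) ?_)
      apply ENNReal.ofReal_le_ofReal
      rw [min_eq_left h2h, hmdef]
      apply le_of_eq
      field_simp
      ring
    have hF3 : ∀ h : ℝ, 2 ≤ h → uniformS2 (A h) ≤ ENNReal.ofReal (32/h^2) := by
      intro h hh
      have hh0 : 0 < h := by linarith
      have h2h : 2/h ≤ 1 := by rw [div_le_one hh0]; linarith
      have hsub3 : A h ⊆ {v : S2 | Real.cos (2/h) ≤ (inner ℝ (-(u:E3)) ((v:E3)) : ℝ)} := by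
        intro v hv
        have hang := hv.1
        have hcos : Real.cos (2/h) ≤ Real.cos (angle (-(u:E3)) ((v:E3))) := by
          apply Real.cos_le_cos_of_nonneg_of_le_pi (angle_nonneg _ _)
          · calc (2:ℝ)/h ≤ 1 := h2h
            _ ≤ π := by linarith [Real.pi_gt_three]
          · exact hang
        rw [cos_angle, norm_neg, hun, normS2 v] at hcos
        simpa using hcos
      have hγ0 : 0 ≤ Real.cos (2/h) := by
        apply Real.cos_nonneg_of_mem_Icc
        constructor
        · calc -(π/2) ≤ 0 := by linarith [Real.pi_gt_three]
          _ ≤ 2/h := by positivity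
        · calc (2:ℝ)/h ≤ 1 := h2h
          _ ≤ π/2 := by linarith [Real.pi_gt_three]
      refine le_trans (measure_mono hsub3)
        (le_trans (cap_bound (by rw [norm_neg]; exact hun) hγ0 (Real.cos_le_one _)) ?_)
      apply ENNReal.ofReal_le_ofReal
      have hsin : Real.sin (2/h) ≤ 2/h := Real.sin_le (by positivity)
      have hsin0 : 0 ≤ Real.sin (2/h) := Real.sin_nonneg_of_nonneg_of_le_pi (by positivity)
        (by calc (2:ℝ)/h ≤ 1 := h2h
            _ ≤ π := by linarith [Real.pi_gt_three])
      have h1 : 1 - Real.cos (2/h)^2 = Real.sin (2/h)^2 := by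
        nlinarith [Real.sin_sq_add_cos_sq (2/h)]
      rw [h1]
      rw [div_eq_mul_inv 32 (h^2), show (32:ℝ) = 8*4 by norm_num]
      have : Real.sin (2/h)^2 ≤ 4 * (h^2)⁻¹ := by
        have h4 : (2/h)^2 = 4 * (h^2)⁻¹ := by field_simp; ring
        nlinarith
      nlinarith
    have hGB := G_bound hs0 hs12 hm0 hm1 (fun h => uniformS2 (A h)) hF1 hF2 hF3
    rw [hstep2 u]
    refine le_trans hGB ?_
    rw [← ENNReal.ofReal_mul (by positivity)]
    apply ENNReal.ofReal_le_ofReal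
    apply le_of_eq
    rw [div_eq_mul_inv]
    ring
  -- final assembly
  calc lamD S' = ∫⁻ u, ((volume.restrict (Set.Ioi (0:ℝ))).prod uniformS2)
        (Prod.mk u ⁻¹' S') ∂uniformS2 := hstep1
  _ ≤ ∫⁻ u, ENNReal.ofReal (64*s*(2+L)) * ENNReal.ofReal (‖cross3 eE (u:E3)‖⁻¹)
        ∂uniformS2 := lintegral_mono_ae hae
  _ = ENNReal.ofReal (64*s*(2+L)) * ∫⁻ u, ENNReal.ofReal (‖cross3 eE (u:E3)‖⁻¹)
        ∂uniformS2 := by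
      rw [lintegral_const_mul _ (f := fun u : S2 => ENNReal.ofReal (‖cross3 eE (u:E3)‖⁻¹)) ((continuous_mfun eE).measurable.inv.ennreal_ofReal)]
  _ ≤ ENNReal.ofReal (64*s*(2+L)) * 64 := by
      exact mul_le_mul_right (inv_m_integral heE) _
  _ ≤ ENNReal.ofReal (16384 * s * L) := by
      rw [show (64:ℝ≥0∞) = ENNReal.ofReal 64 by simp]
      rw [← ENNReal.ofReal_mul (by positivity)]
      apply ENNReal.ofReal_le_ofReal
      have hlogs : Real.log s ≤ -Real.log 2 := by
        calc Real.log s ≤ Real.log (1/2) := Real.log_le_log hs0 hs12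
        _ = -Real.log 2 := by rw [one_div, Real.log_inv]
      have hL23 : 2/3 ≤ L := by
        rw [hL]
        calc (2:ℝ)/3 ≤ Real.log 2 := by nlinarith [Real.log_two_gt_d9]
        _ ≤ -Real.log s := by linarith
        _ ≤ |Real.log s| := neg_le_abs _
      nlinarith [mul_nonneg hs0.le (show (0:ℝ) ≤ 12288*L - 8192 by nlinarith)]
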